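/- Let S ⊆ ℝⁿ×ℝᵖ be sign-invariant with respect to x (i.e., (x,z) ∈ S implies (x̄,z) ∈ S whenever |x̄| = |x| componentwise). Then conv(S) = {(x,z) : ∃ u, (u,z) ∈ conv(S₀) and u ≥ |x| componentwise}, where S₀ = S ∩ (ℝⁿ₊ × ℝᵖ). -/

import Mathlib

open Finset

/-- The `i`-th largest entry (0-indexed) of the tuple `x`. -/
noncomputable def sortedDesc (n : ℕ) (x : Fin n → ℝ) : Fin n → ℝ :=
  fun i => x (Tuple.sort x i.rev)

/-- Sum of the `k` largest entries of `x`. -/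
noncomputable def topSum (n : ℕ) (x : Fin n → ℝ) (k : ℕ) : ℝ :=
  ∑ i ∈ Finset.univ.filter (fun i : Fin n => (i : ℕ) < k), sortedDesc n x i

/-- `u` majorizes `x`. -/
def Majorizes (n : ℕ) (u x : Fin n → ℝ) : Prop :=
  (∀ k, k < n → topSum n x k ≤ topSum n u k) ∧ (∑ i, x i = ∑ i, u i)

/-- `u` weakly submajorizes `x`. -/
def WeakSubmajorizes (n : ℕ) (u x : Fin n → ℝ) : Prop :=
  ∀ k, k ≤ n → topSum n x k ≤ topSum n u k

/-- Number of nonzero components. -/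
noncomputable def suppCard (n : ℕ) (x : Fin n → ℝ) : ℕ :=
  (Finset.univ.filter (fun i => x i ≠ 0)).card

section Aux
variable {n p : ℕ} {S : Set ((Fin n → ℝ) × (Fin p → ℝ))}

lemma flip_mem
    (hS : ∀ x z, (x, z) ∈ S → ∀ x' : Fin n → ℝ, (∀ i, |x' i| = |x i|) → (x', z) ∈ S)
    (k : Fin n) {q : (Fin n → ℝ) × (Fin p → ℝ)} (hq : q ∈ convexHull ℝ S) :
    (Function.update q.1 k (-(q.1 k)), q.2) ∈ convexHull ℝ S := by
  set L : ((Fin n → ℝ) × (Fin p → ℝ)) →ₗ[ℝ] ((Fin n → ℝ) × (Fin p → ℝ)) :=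
    { toFun := fun r => (fun i => if i = k then -(r.1 i) else r.1 i, r.2)
      map_add' := by
        intro a b
        refine Prod.ext (funext fun i => ?_) rfl
        by_cases h : i = k <;> simp [h] <;> ring
      map_smul' := by
        intro c a
        refine Prod.ext (funext fun i => ?_) rfl
        by_cases h : i = k <;> simp [h] <;> ring } with hL
  have himg : L '' S ⊆ S := by
    rintro _ ⟨⟨x, z⟩, hxz, rfl⟩
    exact hS x z hxz _ (fun i => by by_cases h : i = k <;> simp [hL, h])
  have h1 : L q ∈ convexHull ℝ S :=
    convexHull_mono himg (by rw [← L.image_convexHull]; exact Set.mem_image_of_mem _ hq)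
  have h2 : (Function.update q.1 k (-(q.1 k)), q.2) = L q := by
    refine Prod.ext (funext fun i => ?_) rfl
    by_cases h : i = k <;> simp [hL, Function.update_apply, h]
  rw [h2]; exact h1

lemma shrink_mem
    (hS : ∀ x z, (x, z) ∈ S → ∀ x' : Fin n → ℝ, (∀ i, |x' i| = |x i|) → (x', z) ∈ S)
    (k : Fin n) (c : ℝ) {q : (Fin n → ℝ) × (Fin p → ℝ)}
    (hc : |c| ≤ q.1 k) (hq : q ∈ convexHull ℝ S) :
    (Function.update q.1 k c, q.2) ∈ convexHull ℝ S := by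
  by_cases h0 : q.1 k = 0
  · have hc0 : c = 0 := by
      have := hc; rw [h0] at this
      exact abs_eq_zero.mp (le_antisymm this (abs_nonneg c))
    have : (Function.update q.1 k c, q.2) = q := by
      refine Prod.ext (funext fun i => ?_) rfl
      by_cases h : i = k <;> simp [Function.update_apply, h, hc0, h0.symm]
    rw [this]; exact hq
  · have hv : 0 < q.1 k := lt_of_le_of_ne (le_trans (abs_nonneg c) hc) (Ne.symm h0)
    set v := q.1 k with hvdef
    set t := (c + v) / (2 * v) with htdef
    have ht0 : 0 ≤ t := by
      apply div_nonneg _ (by linarith)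
      have := neg_abs_le c; linarith [neg_le_of_abs_le hc]
    have ht1 : t ≤ 1 := by
      rw [htdef, div_le_one (by linarith)]
      have := le_of_abs_le hc; linarith
    have hf := flip_mem hS k hq
    have hcomb := (convex_convexHull ℝ S) hq hf ht0 (by linarith : (0:ℝ) ≤ 1 - t)
      (by ring)
    have heq : (Function.update q.1 k c, q.2)
        = t • q + (1 - t) • (Function.update q.1 k (-(q.1 k)), q.2) := by
      refine Prod.ext (funext fun i => ?_) ?_
      · by_cases h : i = k
        · subst h
          simp only [Prod.fst_add, Prod.smul_fst, Pi.add_apply, Pi.smul_apply,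
            Function.update_self, smul_eq_mul]
          rw [htdef]
          field_simp
          ring
        · simp [Function.update_apply, h]; ring
      · simp only [Prod.snd_add, Prod.smul_snd]; module
    rw [heq]; exact hcomb

end Aux

theorem convexHull_sign_invariant (n p : ℕ)
    (S : Set ((Fin n → ℝ) × (Fin p → ℝ)))
    (hS : ∀ x z, (x, z) ∈ S → ∀ x' : Fin n → ℝ, (∀ i, |x' i| = |x i|) → (x', z) ∈ S) :
    convexHull ℝ S =
      {q : (Fin n → ℝ) × (Fin p → ℝ) | ∃ u : Fin n → ℝ,
        (u, q.2) ∈ convexHull ℝ (S ∩ {r | ∀ i, 0 ≤ r.1 i}) ∧ ∀ i, |q.1 i| ≤ u i} := by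
  apply Set.Subset.antisymm
  · apply convexHull_min
    · rintro ⟨x, z⟩ hxz
      exact ⟨fun i => |x i|,
        subset_convexHull ℝ _ ⟨hS x z hxz _ (fun i => abs_abs _), fun i => abs_nonneg _⟩,
        fun i => le_refl _⟩
    · rintro ⟨x, z⟩ ⟨u, hu, hxu⟩ ⟨x', z'⟩ ⟨u', hu', hxu'⟩ a b ha hb hab
      refine ⟨a • u + b • u', ?_, ?_⟩
      · have h := (convex_convexHull ℝ (S ∩ {r | ∀ i, 0 ≤ r.1 i})) hu hu' ha hb hab
        convert h using 1
        simp [Prod.smul_mk, Prod.mk_add_mk]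
      · intro i
        simp only [Prod.smul_fst, Prod.fst_add, Pi.add_apply, Pi.smul_apply, smul_eq_mul]
        calc |a * x i + b * x' i| ≤ |a * x i| + |b * x' i| := abs_add_le _ _
          _ = a * |x i| + b * |x' i| := by rw [abs_mul, abs_mul, abs_of_nonneg ha, abs_of_nonneg hb]
          _ ≤ a * u i + b * u' i :=
            add_le_add (mul_le_mul_of_nonneg_left (hxu i) ha)
              (mul_le_mul_of_nonneg_left (hxu' i) hb)
  · rintro ⟨x, z⟩ ⟨u, hu, hxu⟩
    have huS : (u, z) ∈ convexHull ℝ S :=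
      convexHull_mono Set.inter_subset_left hu
    have key : ∀ s : Finset (Fin n),
        ((fun i => if i ∈ s then x i else u i), z) ∈ convexHull ℝ S := by
      intro s
      induction s using Finset.induction with
      | empty => simpa using huS
      | @insert a s ha ih =>
        have hle : |x a| ≤ (fun i => if i ∈ s then x i else u i) a := by
          simp [ha]; exact hxu a
        have := shrink_mem hS a (x a) hle ih
        convert this using 2
        funext i
        by_cases hia : i = a <;> simp [Function.update_apply, hia, Finset.mem_insert]
    have := key Finset.univ
    simpa using this
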